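/- arXiv:1210.7582 — 5 statements merged into one kernel-verified Lean document; each statement's English description precedes it below -/
import Mathlib

section
/- Let n, m ≥ 1 and let A be a linear map on ℂ^{m(1+n)} = ℂ^m ⊕ ℂ^{mn} satisfying Re⟨Af, f⟩ ≥ κ|f|² for all f, where κ > 0. Then the corner block A⊥⊥ is invertible, so the transformed matrix Â is well defined, and Â is strictly accretive with the explicit lower bound Re⟨Âf, f⟩ ≥ (κ/(1 + ‖A‖²)) |f|² for all f ∈ ℂ^{m(1+n)}, where ‖A‖ denotes the operator norm of A. -/
noncomputable section

open MeasureTheory Real ContinuousLinearMap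

/-- The "normal" component space `ℂ^m`. -/
abbrev NormalSp (m : ℕ) := EuclideanSpace ℂ (Fin m)
/-- The "tangential" component space `ℂ^{mn} ≅ (ℂ^m)ⁿ`. -/
abbrev TangSp (m n : ℕ) := EuclideanSpace ℂ (Fin m × Fin n)
/-- The full space `ℂ^{m(1+n)} = ℂ^m ⊕ ℂ^{mn}`. -/
abbrev FullSp (m n : ℕ) := EuclideanSpace ℂ (Fin m ⊕ Fin m × Fin n)
/-- `ℝⁿ` with the Euclidean structure. -/
abbrev Rn (n : ℕ) := EuclideanSpace ℝ (Fin n)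

namespace LayerPotential

variable {m n : ℕ}

/-- Injection of the normal part `ℂ^m → ℂ^{m(1+n)}`, `a ↦ (a, 0)`. -/
def injN (m n : ℕ) : NormalSp m →L[ℂ] FullSp m n :=
  LinearMap.toContinuousLinearMap
  { toFun := fun a => WithLp.toLp 2 (Sum.elim a 0 : Fin m ⊕ Fin m × Fin n → ℂ)
    map_add' := by
      intro a b; ext idx; rcases idx with i | p <;> simp
    map_smul' := by
      intro c a; ext idx; rcases idx with i | p <;> simp }

/-- Injection of the tangential part `ℂ^{mn} → ℂ^{m(1+n)}`, `b ↦ (0, b)`. -/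
def injT (m n : ℕ) : TangSp m n →L[ℂ] FullSp m n :=
  LinearMap.toContinuousLinearMap
  { toFun := fun b => WithLp.toLp 2 (Sum.elim 0 b : Fin m ⊕ Fin m × Fin n → ℂ)
    map_add' := by
      intro a b; ext idx; rcases idx with i | p <;> simp
    map_smul' := by
      intro c a; ext idx; rcases idx with i | p <;> simp }

/-- Projection onto the normal part `f ↦ f⊥`. -/
def projN (m n : ℕ) : FullSp m n →L[ℂ] NormalSp m :=
  LinearMap.toContinuousLinearMap
  { toFun := fun f => WithLp.toLp 2 (fun i => f (Sum.inl i) : Fin m → ℂ)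
    map_add' := by intro a b; ext i; simp
    map_smul' := by intro c a; ext i; simp }

/-- Projection onto the tangential part `f ↦ f∥`. -/
def projT (m n : ℕ) : FullSp m n →L[ℂ] TangSp m n :=
  LinearMap.toContinuousLinearMap
  { toFun := fun f => WithLp.toLp 2 (fun p => f (Sum.inr p) : Fin m × Fin n → ℂ)
    map_add' := by intro a b; ext p; simp
    map_smul' := by intro c a; ext p; simp }

/-- The corner block `A⊥⊥`. -/
def blockNN (A : FullSp m n →L[ℂ] FullSp m n) : NormalSp m →L[ℂ] NormalSp m :=
  projN m n ∘L A ∘L injN m n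

/-- The block `A⊥∥`. -/
def blockNT (A : FullSp m n →L[ℂ] FullSp m n) : TangSp m n →L[ℂ] NormalSp m :=
  projN m n ∘L A ∘L injT m n

/-- The block `A∥⊥`. -/
def blockTN (A : FullSp m n →L[ℂ] FullSp m n) : NormalSp m →L[ℂ] TangSp m n :=
  projT m n ∘L A ∘L injN m n

/-- The block `A∥∥`. -/
def blockTT (A : FullSp m n →L[ℂ] FullSp m n) : TangSp m n →L[ℂ] TangSp m n :=
  projT m n ∘L A ∘L injT m n

/-- The transformed matrix `Â`, defined using `Ring.inverse` of the corner block
(which is the honest inverse whenever `A⊥⊥` is invertible). -/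
def hatT (A : FullSp m n →L[ℂ] FullSp m n) : FullSp m n →L[ℂ] FullSp m n :=
  injN m n ∘L ((Ring.inverse (blockNN A)) ∘L projN m n
      - ((Ring.inverse (blockNN A)) ∘L blockNT A) ∘L projT m n)
  + injT m n ∘L ((blockTN A ∘L (Ring.inverse (blockNN A))) ∘L projN m n
      + (blockTT A - (blockTN A ∘L (Ring.inverse (blockNN A))) ∘L blockNT A) ∘L projT m n)

/-- The reflection `N(f⊥, f∥) = (−f⊥, f∥)`. -/
def reflN (m n : ℕ) : FullSp m n →L[ℂ] FullSp m n :=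
  injT m n ∘L projT m n - injN m n ∘L projN m n



/-- The lower triangular factor `[[1,0],[−σ,I]] : (a,b) ↦ (a, b − a⊗σ)`. -/
def lowTri (m : ℕ) (σ : Fin n → ℝ) : FullSp m n →L[ℂ] FullSp m n :=
  LinearMap.toContinuousLinearMap
  { toFun := fun f => WithLp.toLp 2 (Sum.elim (fun i => f (Sum.inl i))
      (fun p => f (Sum.inr p) - (σ p.2 : ℂ) * f (Sum.inl p.1)) :
        Fin m ⊕ Fin m × Fin n → ℂ)
    map_add' := by
      intro a b; ext idx; rcases idx with i | p <;> simp <;> ring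
    map_smul' := by
      intro c a; ext idx; rcases idx with i | p <;> simp <;> ring }

/-- The upper triangular factor `[[1,−σᵗ],[0,I]] : (a,b) ↦ (a − Σ_k σ_k b_k, b)`. -/
def upTri (m : ℕ) (σ : Fin n → ℝ) : FullSp m n →L[ℂ] FullSp m n :=
  LinearMap.toContinuousLinearMap
  { toFun := fun f => WithLp.toLp 2 (Sum.elim (fun i => f (Sum.inl i) - ∑ k, (σ k : ℂ) * f (Sum.inr (i, k)))
      (fun p => f (Sum.inr p)) : Fin m ⊕ Fin m × Fin n → ℂ)
    map_add' := by
      intro a b; ext idx; rcases idx with i | p <;>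
        simp [Finset.sum_add_distrib, mul_add] <;> ring
    map_smul' := by
      intro c a; ext idx; rcases idx with i | p <;>
        simp [Finset.mul_sum, mul_assoc, mul_left_comm, mul_sub] }

/-- The transformed coefficients `A_σ := [[1,−σᵗ],[0,I]] · A · [[1,0],[−σ,I]]`. -/
def coeffSigma (σ : Fin n → ℝ) (A : FullSp m n →L[ℂ] FullSp m n) :
    FullSp m n →L[ℂ] FullSp m n :=
  upTri m σ ∘L A ∘L lowTri m σ

/-- The map `g ↦ (ν₀ g⊥, g⊥ ⊗ ν)`. -/
def tensorMap (m : ℕ) (ν₀ : ℝ) (ν : Fin n → ℝ) : FullSp m n →L[ℂ] FullSp m n :=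
  LinearMap.toContinuousLinearMap
  { toFun := fun g => WithLp.toLp 2 (Sum.elim (fun i => (ν₀ : ℂ) * g (Sum.inl i))
      (fun p => (ν p.2 : ℂ) * g (Sum.inl p.1)) : Fin m ⊕ Fin m × Fin n → ℂ)
    map_add' := by
      intro a b; ext idx; rcases idx with i | p <;> simp <;> ring
    map_smul' := by
      intro c a; ext idx; rcases idx with i | p <;> simp <;> ring }

/-- The map `h ↦ (Σ_k ν_k h∥,k, −ν₀ h∥)`. -/
def contractMap (m : ℕ) (ν₀ : ℝ) (ν : Fin n → ℝ) : FullSp m n →L[ℂ] FullSp m n :=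
  LinearMap.toContinuousLinearMap
  { toFun := fun h => WithLp.toLp 2 (Sum.elim (fun i => ∑ k, (ν k : ℂ) * h (Sum.inr (i, k)))
      (fun p => -(ν₀ : ℂ) * h (Sum.inr p)) : Fin m ⊕ Fin m × Fin n → ℂ)
    map_add' := by
      intro a b; ext idx; rcases idx with i | p <;>
        simp [Finset.sum_add_distrib, mul_add] <;> ring
    map_smul' := by
      intro c a; ext idx; rcases idx with i | p <;>
        simp [Finset.mul_sum, mul_assoc, mul_left_comm, mul_sub] }

/-- The one-form coefficients `Λ_A(ν₀, ν)g := A(ν₀ g⊥, g⊥⊗ν) + (Σ_k ν_k (Ag)∥,k, −ν₀ (Ag)∥)`. -/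
def lambdaForm (A : FullSp m n →L[ℂ] FullSp m n) (ν₀ : ℝ) (ν : Fin n → ℝ) :
    FullSp m n →L[ℂ] FullSp m n :=
  A ∘L tensorMap m ν₀ ν + contractMap m ν₀ ν ∘L A

/-- Partial derivative `∂_k` of a scalar function on `ℝⁿ`. -/
def pd (k : Fin n) (g : Rn n → ℂ) (x : Rn n) : ℂ :=
  fderiv ℝ g x (EuclideanSpace.single k 1)

/-- The self-adjoint first order operator `D(g⊥, g∥) := (div g∥, −∇g⊥)` acting on
functions `ℝⁿ → ℂ^{m(1+n)}`. -/
def Dop (g : Rn n → FullSp m n) (x : Rn n) : FullSp m n :=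
  WithLp.toLp 2 (Sum.elim (fun i => ∑ k, pd k (fun y => g y (Sum.inr (i, k))) x)
    (fun p => - pd p.2 (fun y => g y (Sum.inl p.1)) x) : Fin m ⊕ Fin m × Fin n → ℂ)

/-- Partial derivative `∂_t` of a scalar function on `ℝ^{1+n} = ℝ × ℝⁿ`. -/
def pdt (F : ℝ × Rn n → ℂ) (q : ℝ × Rn n) : ℂ :=
  fderiv ℝ F q (1, 0)

/-- Partial derivative `∂_{x_k}` of a scalar function on `ℝ^{1+n} = ℝ × ℝⁿ`. -/
def pdx (k : Fin n) (F : ℝ × Rn n → ℂ) (q : ℝ × Rn n) : ℂ :=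
  fderiv ℝ F q (0, EuclideanSpace.single k 1)

/-- `∂_t` of a `ℂ^{m(1+n)}`-valued function, componentwise. -/
def pdtVec (F : ℝ × Rn n → FullSp m n) (q : ℝ × Rn n) : FullSp m n :=
  WithLp.toLp 2 (fun idx => pdt (fun r => F r idx) q : Fin m ⊕ Fin m × Fin n → ℂ)

/-- The full gradient `∇u = (∂_t u, ∇_x u)` of a `ℂ^m`-valued function on `ℝ^{1+n}`. -/
def fullGrad (u : ℝ × Rn n → NormalSp m) (q : ℝ × Rn n) : FullSp m n :=
  WithLp.toLp 2 (Sum.elim (fun i => pdt (fun r => u r i) q)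
    (fun p => pdx p.2 (fun r => u r p.1) q) : Fin m ⊕ Fin m × Fin n → ℂ)

/-- The divergence `div G = ∂_t G⊥ + Σ_k ∂_{x_k} G∥,k` of a `ℂ^{m(1+n)}`-valued field
on `ℝ^{1+n}`, valued in `ℂ^m`. -/
def divOp (G : ℝ × Rn n → FullSp m n) (q : ℝ × Rn n) : NormalSp m :=
  WithLp.toLp 2 (fun i => pdt (fun r => G r (Sum.inl i)) q
    + ∑ k, pdx k (fun r => G r (Sum.inr (i, k))) q : Fin m → ℂ)

/-- `u` is a weak (here: classical) solution of `div A∇u = 0` on `Ω`,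
for `t`-independent coefficients `A`. -/
def SolvesDiv (A : Rn n → FullSp m n →L[ℂ] FullSp m n) (u : ℝ × Rn n → NormalSp m)
    (Ω : Set (ℝ × Rn n)) : Prop :=
  ∀ q ∈ Ω, divOp (fun r => A r.2 (fullGrad u r)) q = 0

/-- The conormal gradient `∇_A u = ((A∇u)⊥, ∇_x u)`. -/
def conormalGrad (A : Rn n → FullSp m n →L[ℂ] FullSp m n) (u : ℝ × Rn n → NormalSp m)
    (q : ℝ × Rn n) : FullSp m n :=
  WithLp.toLp 2 (Sum.elim (fun i => (A q.2 (fullGrad u q)) (Sum.inl i))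
    (fun p => pdx p.2 (fun r => u r p.1) q) : Fin m ⊕ Fin m × Fin n → ℂ)



-- aux lemmas
lemma projN_injN (a : NormalSp m) : projN m n (injN m n a) = a := rfl
lemma projT_injN (a : NormalSp m) : projT m n (injN m n a) = 0 := rfl
lemma projN_injT (b : TangSp m n) : projN m n (injT m n b) = 0 := rfl
lemma projT_injT (b : TangSp m n) : projT m n (injT m n b) = b := rfl

lemma decompose (f : FullSp m n) : injN m n (projN m n f) + injT m n (projT m n f) = f := by
  ext idx
  rcases idx with i | p <;>
    simp [injN, injT, projN, projT, PiLp.add_apply]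

lemma inner_split (f h : FullSp m n) :
    (inner ℂ f h : ℂ) =
      inner ℂ (projN m n f) (projN m n h) + inner ℂ (projT m n f) (projT m n h) := by
  simp [PiLp.inner_apply, Fintype.sum_sum_type, projN, projT]

lemma norm_sq_split (f : FullSp m n) :
    ‖f‖ ^ 2 = ‖projN m n f‖ ^ 2 + ‖projT m n f‖ ^ 2 := by
  have h1 := norm_sq_eq_re_inner (𝕜 := ℂ) f
  have h2 := norm_sq_eq_re_inner (𝕜 := ℂ) (projN m n f)
  have h3 := norm_sq_eq_re_inner (𝕜 := ℂ) (projT m n f)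
  rw [h1, h2, h3, inner_split, map_add]


lemma mul_inv_apply {B : NormalSp m →L[ℂ] NormalSp m} (hB : IsUnit B) (x : NormalSp m) :
    B (Ring.inverse B x) = x := by
  rw [← ContinuousLinearMap.mul_apply, Ring.mul_inverse_cancel _ hB,
    ContinuousLinearMap.one_apply]

lemma key_estimate (κ : ℝ) (A : FullSp m n →L[ℂ] FullSp m n)
    (hacc : ∀ f : FullSp m n, κ * ‖f‖ ^ 2 ≤ (inner ℂ f (A f) : ℂ).re) (a : NormalSp m) :
    κ * ‖a‖ ^ 2 ≤ (inner ℂ a (blockNN A a) : ℂ).re := by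
  have h := hacc (injN m n a)
  have hn : ‖(injN m n a : FullSp m n)‖ ^ 2 = ‖a‖ ^ 2 := by
    rw [norm_sq_split, projN_injN, projT_injN, norm_zero]; ring
  have hi : (inner ℂ (injN m n a) (A (injN m n a)) : ℂ) = inner ℂ a (blockNN A a) := by
    rw [inner_split, projN_injN, projT_injN, inner_zero_left, add_zero]
    rfl
  rw [hn, hi] at h
  exact h

lemma blockNN_unit (κ : ℝ) (hκ : 0 < κ) (A : FullSp m n →L[ℂ] FullSp m n)
    (hacc : ∀ f : FullSp m n, κ * ‖f‖ ^ 2 ≤ (inner ℂ f (A f) : ℂ).re) :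
    IsUnit (blockNN A) := by
  have hinj : Function.Injective (blockNN A) := by
    intro a b hab
    have h0 : blockNN A (a - b) = 0 := by rw [map_sub, hab, sub_self]
    have h := key_estimate κ A hacc (a - b)
    rw [h0, inner_zero_right] at h
    simp only [Complex.zero_re] at h
    have : ‖a - b‖ ^ 2 ≤ 0 := by nlinarith
    have : ‖a - b‖ = 0 := by nlinarith [norm_nonneg (a - b), sq_nonneg ‖a - b‖]
    rwa [norm_eq_zero, sub_eq_zero] at this
  have hbij : Function.Bijective ((blockNN A).toLinearMap) :=
    ⟨hinj, (LinearMap.injective_iff_surjective).1 hinj⟩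
  let e := LinearEquiv.ofBijective ((blockNN A).toLinearMap) hbij
  exact ⟨e.toContinuousLinearEquiv.toUnit, by ext x; rfl⟩

set_option maxHeartbeats 1000000 in
/-- for a strictly accretive `A` on `ℂ^{m(1+n)}` the corner block
`A⊥⊥` is invertible, so `Â` is well defined, and `Â` is strictly accretive with
constant `κ/(1 + ‖A‖²)`. -/
theorem statement1 (m n : ℕ) (hm : 1 ≤ m) (hn : 1 ≤ n) (κ : ℝ) (hκ : 0 < κ)
    (A : FullSp m n →L[ℂ] FullSp m n)
    (hacc : ∀ f : FullSp m n, κ * ‖f‖ ^ 2 ≤ (inner ℂ f (A f) : ℂ).re) :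
    IsUnit (blockNN A) ∧
    ∀ f : FullSp m n, κ / (1 + ‖A‖ ^ 2) * ‖f‖ ^ 2 ≤ (inner ℂ f (hatT A f) : ℂ).re := by
  have hB : IsUnit (blockNN A) := blockNN_unit κ hκ A hacc
  refine ⟨hB, fun f => ?_⟩
  set B := blockNN A with hBdef
  set v : TangSp m n := projT m n f with hv
  set u : NormalSp m := Ring.inverse B (projN m n f - blockNT A v) with hu
  set g : FullSp m n := injN m n u + injT m n v with hg
  have hBu : B u = projN m n f - blockNT A v := mul_inv_apply hB _
  have hpgN : projN m n g = u := by
    rw [hg, map_add, projN_injN, projN_injT, add_zero]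
  have hpgT : projT m n g = v := by
    rw [hg, map_add, projT_injN, projT_injT, zero_add]
  have hAgN : projN m n (A g) = projN m n f := by
    rw [hg, map_add, map_add]
    have : projN m n (A (injN m n u)) = B u := rfl
    rw [this, hBu]
    have : projN m n (A (injT m n v)) = blockNT A v := rfl
    rw [this, sub_add_cancel]
  have hAgT : projT m n (A g) = blockTN A u + blockTT A v := by
    rw [hg, map_add, map_add]; rfl
  -- components of hatT A f
  have hhN : projN m n (hatT A f) = u := by
    rw [hatT]
    simp only [ContinuousLinearMap.add_apply, ContinuousLinearMap.comp_apply, map_add,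
      projN_injN, projN_injT, add_zero]
    rw [hu, map_sub]
    rfl
  have hhT : projT m n (hatT A f) = blockTN A u + blockTT A v := by
    rw [hatT]
    simp only [ContinuousLinearMap.add_apply, ContinuousLinearMap.comp_apply, map_add,
      projT_injN, projT_injT, zero_add]
    rw [hu, map_sub, map_sub]
    simp only [ContinuousLinearMap.sub_apply, ContinuousLinearMap.comp_apply]
    abel
  -- Re inner identity
  have hre : (inner ℂ f (hatT A f) : ℂ).re = (inner ℂ g (A g) : ℂ).re := by
    rw [inner_split f (hatT A f), inner_split g (A g), hhN, hhT, hpgN, hpgT, hAgN, hAgT, hv]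
    have h1 : (inner ℂ (projN m n f) u : ℂ).re = (inner ℂ u (projN m n f) : ℂ).re := by
      rw [← inner_conj_symm, Complex.conj_re]
    rw [Complex.add_re, Complex.add_re, h1]
  -- norm estimate
  have hnormf : ‖f‖ ^ 2 ≤ (1 + ‖A‖ ^ 2) * ‖g‖ ^ 2 := by
    have h1 : ‖f‖ ^ 2 = ‖projN m n (A g)‖ ^ 2 + ‖projT m n g‖ ^ 2 := by
      rw [hAgN, hpgT, hv, norm_sq_split]
    have h2 : ‖projN m n (A g)‖ ^ 2 ≤ ‖A g‖ ^ 2 := by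
      have := norm_sq_split (A g)
      linarith [sq_nonneg ‖projT m n (A g)‖]
    have h3 : ‖projT m n g‖ ^ 2 ≤ ‖g‖ ^ 2 := by
      have := norm_sq_split g
      linarith [sq_nonneg ‖projN m n g‖]
    have h4 : ‖A g‖ ≤ ‖A‖ * ‖g‖ := A.le_opNorm g
    have h5 : ‖A g‖ ^ 2 ≤ ‖A‖ ^ 2 * ‖g‖ ^ 2 := by
      rw [← mul_pow]; exact pow_le_pow_left₀ (norm_nonneg _) h4 2
    rw [add_mul, one_mul]
    linarith
  have hpos : (0:ℝ) < 1 + ‖A‖ ^ 2 := by positivity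
  have hκg := hacc g
  rw [hre]
  calc κ / (1 + ‖A‖ ^ 2) * ‖f‖ ^ 2
      ≤ κ / (1 + ‖A‖ ^ 2) * ((1 + ‖A‖ ^ 2) * ‖g‖ ^ 2) := by
        apply mul_le_mul_of_nonneg_left hnormf (by positivity)
    _ = κ * ‖g‖ ^ 2 := by
        rw [div_mul_eq_mul_div, mul_div_assoc, mul_comm (1 + ‖A‖ ^ 2), mul_div_assoc,
          div_self hpos.ne', mul_one]
    _ ≤ (inner ℂ g (A g) : ℂ).re := hκg


end LayerPotential
end
end

section
/- Let n, m ≥ 1, let A be a linear map on ℂ^{m(1+n)} = ℂ^m ⊕ ℂ^{mn}, and let σ ∈ ℝⁿ. Let L := [[1, 0],[σ, I]] (i.e. L(a,b) = (a, b + a⊗σ)) and let L* = [[1, σᵗ],[0, I]] be its adjoint. Then L* · diag(−(A_σ)⊥⊥, (A_σ)∥∥) · L = Λ_A(−1, σ), where diag(−(A_σ)⊥⊥, (A_σ)∥∥) denotes the block diagonal map (a, b) ↦ (−(A_σ)⊥⊥ a, (A_σ)∥∥ b). -/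
noncomputable section

open MeasureTheory Real ContinuousLinearMap

namespace LayerPotential

variable {m n : ℕ}

/-- with `L = [[1,0],[σ,I]]` and its adjoint `L* = [[1,σᵗ],[0,I]]`,
one has `L* · diag(−(A_σ)⊥⊥, (A_σ)∥∥) · L = Λ_A(−1, σ)`. -/
theorem statement6 (m n : ℕ) (hm : 1 ≤ m) (hn : 1 ≤ n)
    (A : FullSp m n →L[ℂ] FullSp m n) (σ : Fin n → ℝ) :
    upTri m (fun k => -σ k) ∘L
      (injT m n ∘L blockTT (coeffSigma σ A) ∘L projT m n
        - injN m n ∘L blockNN (coeffSigma σ A) ∘L projN m n) ∘L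
      lowTri m (fun k => -σ k)
    = lambdaForm A (-1) σ := by
  have h1 : ∀ g : FullSp m n,
      lowTri m σ ((injN m n) ((projN m n) (lowTri m (fun k => -σ k) g)))
        = -(tensorMap m (-1) σ g) := by
    intro g
    ext idx
    rcases idx with i | p <;>
      simp [lowTri, injN, projN, tensorMap] <;> ring
  have h2 : ∀ g : FullSp m n,
      lowTri m σ ((injT m n) ((projT m n) (lowTri m (fun k => -σ k) g)))
        = g + tensorMap m (-1) σ g := by
    intro g
    ext idx
    rcases idx with i | p <;>
      simp [lowTri, injT, projT, tensorMap] <;> ring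
  ext g idx
  simp only [ContinuousLinearMap.comp_apply, ContinuousLinearMap.sub_apply,
    ContinuousLinearMap.add_apply, blockTT, blockNN, coeffSigma, lambdaForm]
  rw [h1, h2, map_neg, map_add]
  rcases idx with i | p <;>
    simp [upTri, injN, injT, projN, projT, tensorMap, contractMap,
      PiLp.sub_apply, PiLp.add_apply, PiLp.neg_apply,
      Finset.sum_add_distrib, Finset.sum_sub_distrib, mul_add, mul_sub] <;> ring


end LayerPotential
end
end

section
/- Let d ≥ 2 (playing the role of d = 1+n with n = d−1 ≥ 1), z₀ ∈ ℝ^d and C > 0. Let f : ℝ^d → ℂ^N be measurable and suppose that for every r > 0, ∫_{{z : r < |z−z₀| < 2r}} |f(z)|² dz ≤ C r^{2−d}. Then for every exponent p with 1 ≤ p < d/(d−1) there is a constant c depending only on d and p such that for all R > 0, ∫_{{z : |z−z₀| < R}} |f(z)|^p dz ≤ c C^{p/2} R^{d − (d−1)p}. In particular f is locally in L^p on ℝ^d for all 1 ≤ p < d/(d−1). -/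
noncomputable section

open MeasureTheory Real
open scoped ENNReal NNReal


lemma holder_aux {X E : Type*} [MeasurableSpace X] [NormedAddCommGroup E] (μ : Measure X)
    (f : X → E) (hf : AEStronglyMeasurable f μ) {p : ℝ} (hp1 : 1 ≤ p) (hp2 : p ≤ 2) :
    ∫⁻ x, (‖f x‖₊ : ℝ≥0∞) ^ p ∂μ ≤
      (∫⁻ x, (‖f x‖₊ : ℝ≥0∞) ^ (2 : ℝ) ∂μ) ^ (p / 2) * (μ Set.univ) ^ (1 - p / 2) := by
  have hp0 : 0 < p := lt_of_lt_of_le one_pos hp1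
  set P : ℝ≥0∞ := ENNReal.ofReal p with hP
  have hP0 : P ≠ 0 := by simp [hP, ENNReal.ofReal_eq_zero]; linarith
  have hPtop : P ≠ ⊤ := ENNReal.ofReal_ne_top
  have hPtoReal : P.toReal = p := ENNReal.toReal_ofReal hp0.le
  have hP2 : P ≤ 2 := by
    rw [hP, show (2 : ℝ≥0∞) = ENNReal.ofReal 2 by simp]
    exact ENNReal.ofReal_le_ofReal hp2
  have h := eLpNorm_le_eLpNorm_mul_rpow_measure_univ hP2 hf
  rw [eLpNorm_eq_lintegral_rpow_enorm_toReal hP0 hPtop,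
    eLpNorm_eq_lintegral_rpow_enorm_toReal (by norm_num) (by norm_num)] at h
  have h2 : ((2 : ℝ≥0∞)).toReal = (2 : ℝ) := by norm_num
  rw [hPtoReal, h2] at h
  have h' := ENNReal.rpow_le_rpow h hp0.le
  calc ∫⁻ x, (‖f x‖₊ : ℝ≥0∞) ^ p ∂μ
      = (((∫⁻ x, (‖f x‖₊ : ℝ≥0∞) ^ p ∂μ) ^ (1 / p)) ^ p) := by
        rw [← ENNReal.rpow_mul, one_div, inv_mul_cancel₀ hp0.ne', ENNReal.rpow_one]
    _ ≤ (((∫⁻ x, (‖f x‖₊ : ℝ≥0∞) ^ (2:ℝ) ∂μ) ^ (1/(2:ℝ)) * μ Set.univ ^ (1 / p - 1 / 2)) ^ p) := h'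
    _ = (∫⁻ x, (‖f x‖₊ : ℝ≥0∞) ^ (2 : ℝ) ∂μ) ^ (p / 2) * (μ Set.univ) ^ (1 - p / 2) := by
        rw [ENNReal.mul_rpow_of_nonneg _ _ hp0.le, ← ENNReal.rpow_mul, ← ENNReal.rpow_mul]
        congr 1
        · congr 1; field_simp
        · congr 1; field_simp

lemma annulus_bound (d N : ℕ) (hd : 2 ≤ d) {p : ℝ} (hp1 : 1 ≤ p) (hp2 : p < 2)
    (C : ℝ) (hC : 0 < C) (z₀ : EuclideanSpace ℝ (Fin d))
    (f : EuclideanSpace ℝ (Fin d) → EuclideanSpace ℂ (Fin N)) (hf : StronglyMeasurable f)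
    {r : ℝ} (hr : 0 < r)
    (h : ∫⁻ z in {z : EuclideanSpace ℝ (Fin d) | r < ‖z - z₀‖ ∧ ‖z - z₀‖ < 2 * r},
        (‖f z‖₊ : ℝ≥0∞) ^ 2 ≤ ENNReal.ofReal (C * r ^ (2 - (d : ℝ)))) :
    ∫⁻ z in {z : EuclideanSpace ℝ (Fin d) | r < ‖z - z₀‖ ∧ ‖z - z₀‖ < 2 * r},
        (‖f z‖₊ : ℝ≥0∞) ^ p
      ≤ ENNReal.ofReal (C ^ (p/2) * 2 ^ ((d:ℝ) * (1 - p/2)) * r ^ ((d:ℝ) - ((d:ℝ) - 1) * p)) *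
        (volume (Metric.ball (0 : EuclideanSpace ℝ (Fin d)) 1)) ^ (1 - p/2) := by
  haveI : Nonempty (Fin d) := ⟨⟨0, by omega⟩⟩
  haveI : Nontrivial (EuclideanSpace ℝ (Fin d)) := inferInstance
  set S := {z : EuclideanSpace ℝ (Fin d) | r < ‖z - z₀‖ ∧ ‖z - z₀‖ < 2 * r} with hS
  set B := volume (Metric.ball (0 : EuclideanSpace ℝ (Fin d)) 1) with hB
  have key := holder_aux (volume.restrict S) f hf.aestronglyMeasurable hp1 hp2.le
  rw [Measure.restrict_apply_univ] at key
  have h2 : ∀ x : ℝ≥0∞, x ^ (2:ℝ) = x ^ (2:ℕ) := fun x => by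
    rw [← ENNReal.rpow_natCast]; norm_num
  simp only [h2] at key
  -- measure bound
  have hmeas : volume S ≤ ENNReal.ofReal ((2*r) ^ ((d:ℝ))) * B := by
    have hsub : S ⊆ Metric.ball z₀ (2*r) := by
      intro z hz
      rw [Metric.mem_ball, dist_eq_norm]
      exact hz.2
    refine le_trans (measure_mono hsub) ?_
    rw [Measure.addHaar_ball volume z₀ (by positivity)]
    rw [finrank_euclideanSpace_fin, ← Real.rpow_natCast (2*r) d]
  have hp2' : (0:ℝ) ≤ 1 - p/2 := by linarith
  have key2 : ∫⁻ z in S, (‖f z‖₊ : ℝ≥0∞) ^ p ≤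
      (ENNReal.ofReal (C * r ^ (2 - (d : ℝ)))) ^ (p/2) *
      (ENNReal.ofReal ((2*r) ^ ((d:ℝ))) * B) ^ (1 - p/2) := by
    refine le_trans key (mul_le_mul ?_ ?_ zero_le zero_le)
    · exact ENNReal.rpow_le_rpow h (by positivity)
    · exact ENNReal.rpow_le_rpow hmeas hp2'
  refine le_trans key2 ?_
  rw [ENNReal.mul_rpow_of_nonneg _ _ hp2',
    ENNReal.ofReal_rpow_of_pos (by positivity),
    ENNReal.ofReal_rpow_of_pos (by positivity), ← mul_assoc]
  gcongr
  rw [← ENNReal.ofReal_mul (by positivity)]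
  refine ENNReal.ofReal_le_ofReal (le_of_eq ?_)
  rw [Real.mul_rpow hC.le (by positivity), Real.mul_rpow (by norm_num) hr.le,
    Real.mul_rpow (by positivity) (by positivity),
    ← Real.rpow_mul (by norm_num : (0:ℝ) ≤ 2), ← Real.rpow_mul hr.le, ← Real.rpow_mul hr.le]
  calc C ^ (p/2) * r ^ ((2 - (d:ℝ)) * (p/2)) * (2 ^ ((d:ℝ)*(1-p/2)) * r ^ ((d:ℝ)*(1-p/2)))
      = C ^ (p/2) * 2 ^ ((d:ℝ)*(1-p/2)) * (r ^ ((2 - (d:ℝ)) * (p/2)) * r ^ ((d:ℝ)*(1-p/2))) := by ring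
    _ = C ^ (p/2) * 2 ^ ((d:ℝ)*(1-p/2)) * r ^ ((d:ℝ) - ((d:ℝ) - 1) * p) := by
        rw [← Real.rpow_add hr]; ring_nf

/-- dyadic annular `L²` bounds `∫_{r<|z−z₀|<2r} |f|² ≤ C r^{2−d}` imply,
for every `1 ≤ p < d/(d−1)`, a local `L^p` bound
`∫_{|z−z₀|<R} |f|^p ≤ c C^{p/2} R^{d−(d−1)p}` with `c = c(d,p)`; in particular `f`
is locally in `L^p`. -/
theorem statement8 (d : ℕ) (hd : 2 ≤ d) (p : ℝ) (hp1 : 1 ≤ p)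
    (hp2 : p < (d : ℝ) / ((d : ℝ) - 1)) :
    ∃ c : ℝ, 0 < c ∧
      ∀ (N : ℕ) (C : ℝ), 0 < C →
      ∀ (z₀ : EuclideanSpace ℝ (Fin d)) (f : EuclideanSpace ℝ (Fin d) → EuclideanSpace ℂ (Fin N)),
        StronglyMeasurable f →
        (∀ r : ℝ, 0 < r →
          ∫⁻ z in {z : EuclideanSpace ℝ (Fin d) | r < ‖z - z₀‖ ∧ ‖z - z₀‖ < 2 * r},
              (‖f z‖₊ : ℝ≥0∞) ^ 2
            ≤ ENNReal.ofReal (C * r ^ (2 - (d : ℝ)))) →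
        (∀ R : ℝ, 0 < R →
          ∫⁻ z in {z : EuclideanSpace ℝ (Fin d) | ‖z - z₀‖ < R},
              (‖f z‖₊ : ℝ≥0∞) ^ p
            ≤ ENNReal.ofReal (c * C ^ (p / 2) * R ^ ((d : ℝ) - ((d : ℝ) - 1) * p))) ∧
        LocallyIntegrable (fun z => ‖f z‖ ^ p) := by
  have hd2 : (2:ℝ) ≤ (d:ℝ) := by exact_mod_cast hd
  have hd1 : (0:ℝ) < (d:ℝ) - 1 := by linarith
  have hp0 : (0:ℝ) < p := by linarith
  set α : ℝ := (d:ℝ) - ((d:ℝ) - 1) * p with hα_def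
  have hα : 0 < α := by
    rw [lt_div_iff₀ hd1] at hp2
    simp only [hα_def]; nlinarith
  have hplt2 : p < 2 := lt_of_lt_of_le hp2 (by rw [div_le_iff₀ hd1]; linarith)
  have hp2' : (0:ℝ) ≤ 1 - p/2 := by linarith
  haveI : Nonempty (Fin d) := ⟨⟨0, by omega⟩⟩
  haveI : Nontrivial (EuclideanSpace ℝ (Fin d)) := inferInstance
  set q : ℝ := (2:ℝ) ^ (-α) with hq_def
  have hq0 : 0 < q := Real.rpow_pos_of_pos two_pos _
  have hq1 : q < 1 := Real.rpow_lt_one_of_one_lt_of_neg one_lt_two (by linarith)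
  set β : ℝ := (d:ℝ) * (1 - p/2) with hβ_def
  set B : ℝ≥0∞ := volume (Metric.ball (0 : EuclideanSpace ℝ (Fin d)) 1) with hB_def
  have hBtop : B ≠ ⊤ := (measure_ball_lt_top).ne
  set Bp : ℝ≥0∞ := B ^ (1 - p/2) with hBp_def
  have hBptop : Bp ≠ ⊤ := ENNReal.rpow_ne_top_of_nonneg hp2' hBtop
  set K : ℝ≥0∞ := ENNReal.ofReal ((2:ℝ)^β * q * (1-q)⁻¹) * Bp with hK_def
  have hKtop : K ≠ ⊤ := ENNReal.mul_ne_top ENNReal.ofReal_ne_top hBptop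
  have hKnn : (0:ℝ) ≤ K.toReal := ENNReal.toReal_nonneg
  refine ⟨K.toReal + 1, by positivity, ?_⟩
  intro N C hC z₀ f hf hann
  have hKc : K ≤ ENNReal.ofReal (K.toReal + 1) := by
    conv_lhs => rw [← ENNReal.ofReal_toReal hKtop]
    exact ENNReal.ofReal_le_ofReal (by linarith)
  have hbound : ∀ R : ℝ, 0 < R →
      ∫⁻ z in {z : EuclideanSpace ℝ (Fin d) | ‖z - z₀‖ < R},
          (‖f z‖₊ : ℝ≥0∞) ^ p
        ≤ ENNReal.ofReal ((K.toReal + 1) * C ^ (p / 2) * R ^ α) := by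
    intro R hR
    have hcov : {z : EuclideanSpace ℝ (Fin d) | ‖z - z₀‖ < R} ⊆
        (({z₀} : Set (EuclideanSpace ℝ (Fin d))) ∪
          ⋃ j : ℕ, Metric.sphere z₀ (R / 2^(j+1))) ∪
        ⋃ j : ℕ, {z | R / 2^(j+1) < ‖z - z₀‖ ∧ ‖z - z₀‖ < 2 * (R / 2^(j+1))} := by
      intro z hz
      rcases eq_or_ne z z₀ with h | h
      · exact Or.inl (Or.inl (by simp [h]))
      · have ht0 : 0 < ‖z - z₀‖ := by
          rw [norm_pos_iff]; exact sub_ne_zero.mpr h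
        have hex : ∃ j : ℕ, R / 2^(j+1) ≤ ‖z - z₀‖ := by
          obtain ⟨n, hn⟩ := pow_unbounded_of_one_lt (R / ‖z - z₀‖) (one_lt_two (α := ℝ))
          refine ⟨n, ?_⟩
          rw [div_le_iff₀ (by positivity : (0:ℝ) < 2^(n+1))]
          rw [div_lt_iff₀ ht0] at hn
          have h2n : (2:ℝ)^n ≤ 2^(n+1) := by
            apply pow_le_pow_right₀ (by norm_num); omega
          nlinarith
        have hj : R / 2^(Nat.find hex + 1) ≤ ‖z - z₀‖ := Nat.find_spec hex
        have hj2 : ‖z - z₀‖ < R / 2^(Nat.find hex) := by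
          rcases Nat.eq_zero_or_pos (Nat.find hex) with h0 | h0
          · rw [h0]; simpa using hz
          · have hmin := Nat.find_min hex (m := Nat.find hex - 1) (by omega)
            push_neg at hmin
            have heq : Nat.find hex - 1 + 1 = Nat.find hex := Nat.succ_pred_eq_of_pos h0
            rwa [heq] at hmin
        rcases eq_or_lt_of_le hj with heq | hlt
        · refine Or.inl (Or.inr (Set.mem_iUnion.mpr ⟨Nat.find hex, ?_⟩))
          simp only [Metric.mem_sphere, dist_eq_norm]
          exact heq.symm
        · refine Or.inr (Set.mem_iUnion.mpr ⟨Nat.find hex, hlt, ?_⟩)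
          have h2 : 2 * (R / 2^(Nat.find hex + 1)) = R / 2^(Nat.find hex) := by
            rw [pow_succ]; field_simp; ring
          rw [h2]; exact hj2
    have hnull : volume (({z₀} : Set (EuclideanSpace ℝ (Fin d))) ∪
        ⋃ j : ℕ, Metric.sphere z₀ (R / 2^(j+1))) = 0 :=
      measure_union_null (measure_singleton _)
        (measure_iUnion_null fun j => Measure.addHaar_sphere volume z₀ _)
    have hterm : ∀ j : ℕ,
        ENNReal.ofReal (C^(p/2) * 2^β * (R/2^(j+1))^α) * Bp
          = (ENNReal.ofReal (C^(p/2) * 2^β * (R^α * q)) * Bp) * (ENNReal.ofReal q)^j := by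
      intro j
      have hq' : q ^ (j+1) = (((2:ℝ)^(j+1)) ^ α)⁻¹ := by
        rw [hq_def, ← Real.rpow_natCast ((2:ℝ) ^ (-α)) (j+1),
          ← Real.rpow_natCast (2:ℝ) (j+1),
          ← Real.rpow_mul (by norm_num : (0:ℝ) ≤ 2),
          ← Real.rpow_mul (by norm_num : (0:ℝ) ≤ 2),
          ← Real.rpow_neg (by norm_num : (0:ℝ) ≤ 2)]
        congr 1; ring
      have h1 : (R/2^(j+1))^α = R^α * (q * q^j) := by
        rw [Real.div_rpow hR.le (by positivity), div_eq_mul_inv, ← hq', ← pow_succ']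
      rw [h1, show C^(p/2) * 2^β * (R^α * (q * q^j)) = (C^(p/2) * 2^β * (R^α * q)) * q^j by ring,
        ENNReal.ofReal_mul (by positivity), ENNReal.ofReal_pow hq0.le]
      ring
    have hgeom : (∑' j : ℕ, ENNReal.ofReal (C^(p/2) * 2^β * (R/2^(j+1))^α) * Bp)
        = (ENNReal.ofReal (C^(p/2) * 2^β * (R^α * q)) * Bp) * (1 - ENNReal.ofReal q)⁻¹ := by
      simp only [hterm]
      rw [ENNReal.tsum_mul_left, ENNReal.tsum_geometric]
    have hinv : (1 - ENNReal.ofReal q)⁻¹ = ENNReal.ofReal ((1-q)⁻¹) := by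
      rw [show (1:ℝ≥0∞) - ENNReal.ofReal q = ENNReal.ofReal (1 - q) by
          rw [ENNReal.ofReal_sub 1 hq0.le, ENNReal.ofReal_one],
        ENNReal.ofReal_inv_of_pos (by linarith)]
    calc ∫⁻ z in {z : EuclideanSpace ℝ (Fin d) | ‖z - z₀‖ < R}, (‖f z‖₊ : ℝ≥0∞) ^ p
        ≤ ∫⁻ z in (({z₀} : Set (EuclideanSpace ℝ (Fin d))) ∪
              ⋃ j : ℕ, Metric.sphere z₀ (R / 2^(j+1))) ∪
            ⋃ j : ℕ, {z | R / 2^(j+1) < ‖z - z₀‖ ∧ ‖z - z₀‖ < 2 * (R / 2^(j+1))},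
            (‖f z‖₊ : ℝ≥0∞) ^ p := lintegral_mono_set hcov
      _ ≤ (∫⁻ z in (({z₀} : Set (EuclideanSpace ℝ (Fin d))) ∪
              ⋃ j : ℕ, Metric.sphere z₀ (R / 2^(j+1))), (‖f z‖₊ : ℝ≥0∞) ^ p) +
          ∫⁻ z in ⋃ j : ℕ, {z | R / 2^(j+1) < ‖z - z₀‖ ∧ ‖z - z₀‖ < 2 * (R / 2^(j+1))},
            (‖f z‖₊ : ℝ≥0∞) ^ p := lintegral_union_le _ _ _
      _ ≤ 0 + ∑' j : ℕ, ∫⁻ z in {z | R / 2^(j+1) < ‖z - z₀‖ ∧ ‖z - z₀‖ < 2 * (R / 2^(j+1))},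
            (‖f z‖₊ : ℝ≥0∞) ^ p :=
          add_le_add (le_of_eq (setLIntegral_measure_zero _ _ hnull)) (lintegral_iUnion_le _ _)
      _ ≤ ∑' j : ℕ, ENNReal.ofReal (C^(p/2) * 2^β * (R/2^(j+1))^α) * Bp := by
          rw [zero_add]
          refine ENNReal.tsum_le_tsum fun j => ?_
          exact annulus_bound d N hd hp1 hplt2 C hC z₀ f hf (by positivity)
            (hann _ (by positivity))
      _ = (ENNReal.ofReal (C^(p/2) * 2^β * (R^α * q)) * Bp) * (1 - ENNReal.ofReal q)⁻¹ := hgeom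
      _ = ENNReal.ofReal (C^(p/2) * R^α) * K := by
          rw [hinv, hK_def, mul_right_comm, ← ENNReal.ofReal_mul (by positivity),
            ← mul_assoc (ENNReal.ofReal (C ^ (p / 2) * R ^ α)),
            ← ENNReal.ofReal_mul (by positivity)]
          congr 2
          ring
      _ ≤ ENNReal.ofReal (C^(p/2) * R^α) * ENNReal.ofReal (K.toReal + 1) :=
          mul_le_mul' le_rfl hKc
      _ = ENNReal.ofReal ((K.toReal + 1) * C ^ (p / 2) * R ^ α) := by
          rw [← ENNReal.ofReal_mul (by positivity)]
          congr 1; ring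
  refine ⟨hbound, ?_⟩
  rw [locallyIntegrable_iff]
  intro k hk
  obtain ⟨R, hR0, hsub⟩ := hk.isBounded.subset_ball_lt 0 z₀
  have hball : Metric.ball z₀ R = {z : EuclideanSpace ℝ (Fin d) | ‖z - z₀‖ < R} := by
    ext z; simp [Metric.mem_ball, dist_eq_norm]
  refine IntegrableOn.mono_set ?_ hsub
  constructor
  · exact ((continuous_id.rpow_const fun x => Or.inr hp0.le).comp_stronglyMeasurable
      hf.norm).aestronglyMeasurable
  · rw [HasFiniteIntegral]
    have heq : ∀ z : EuclideanSpace ℝ (Fin d),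
        (‖(‖f z‖^p)‖₊ : ℝ≥0∞) = (‖f z‖₊ : ℝ≥0∞)^p := by
      intro z
      rw [← enorm_eq_nnnorm, ← enorm_eq_nnnorm, ← ofReal_norm, ← ofReal_norm,
        Real.norm_of_nonneg (by positivity), ENNReal.ofReal_rpow_of_nonneg (norm_nonneg _) hp0.le]
    calc ∫⁻ z in Metric.ball z₀ R, (‖(‖f z‖^p)‖₊ : ℝ≥0∞)
        = ∫⁻ z in {z : EuclideanSpace ℝ (Fin d) | ‖z - z₀‖ < R}, (‖f z‖₊ : ℝ≥0∞)^p := by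
          rw [hball]; exact lintegral_congr fun z => heq z
      _ ≤ ENNReal.ofReal ((K.toReal + 1) * C ^ (p / 2) * R ^ α) := hbound R hR0
      _ < ⊤ := ENNReal.ofReal_lt_top
end
end

section
/- Let n, m ≥ 1, let Ω ⊆ ℝ^{1+n} be open, and let A : ℝⁿ → L(ℂ^{m(1+n)}) be continuously differentiable with A⊥⊥(x) invertible for every x; set B(x) := Â(x). Let v : Ω → ℂ^m ⊕ (ℂ^m)ⁿ be twice continuously differentiable and solve ∂_t v + B(Dv) = 0 in Ω, where D acts in the x-variable for each fixed t. Then u := −v⊥ solves div A∇u = 0 in Ω, and the conormal gradient of u equals Dv, i.e. (A∇u)⊥ = (Dv)⊥ and ∇_x u = (Dv)∥ in Ω. -/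
noncomputable section

open MeasureTheory Real ContinuousLinearMap

namespace LayerPotential

variable {m n : ℕ}

/-! ### Auxiliary lemmas -/

lemma injN_inl (a : NormalSp m) (i : Fin m) : injN m n a (Sum.inl i) = a i := rfl
lemma injN_inr (a : NormalSp m) (p : Fin m × Fin n) : injN m n a (Sum.inr p) = 0 := rfl
lemma injT_inl (b : TangSp m n) (i : Fin m) : injT m n b (Sum.inl i) = 0 := rfl
lemma injT_inr (b : TangSp m n) (p : Fin m × Fin n) : injT m n b (Sum.inr p) = b p := rfl
lemma projN_apply (f : FullSp m n) (i : Fin m) : projN m n f i = f (Sum.inl i) := rfl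
lemma projT_apply (f : FullSp m n) (p : Fin m × Fin n) : projT m n f p = f (Sum.inr p) := rfl

lemma projN_hatT (A : FullSp m n →L[ℂ] FullSp m n) (h : FullSp m n) :
    projN m n (hatT A h)
      = Ring.inverse (blockNN A) (projN m n h)
        - Ring.inverse (blockNN A) (blockNT A (projT m n h)) := by
  simp [hatT, map_add, map_sub, projN_injN, projN_injT]

lemma projT_hatT (A : FullSp m n →L[ℂ] FullSp m n) (h : FullSp m n) :
    projT m n (hatT A h)
      = blockTN A (Ring.inverse (blockNN A) (projN m n h))
        + (blockTT A (projT m n h)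
          - blockTN A (Ring.inverse (blockNN A) (blockNT A (projT m n h)))) := by
  simp [hatT, map_add, map_sub, projT_injN, projT_injT]

lemma inverse_cancel (A : FullSp m n →L[ℂ] FullSp m n) (hA : IsUnit (blockNN A))
    (a : NormalSp m) : blockNN A (Ring.inverse (blockNN A) a) = a := by
  have h := Ring.mul_inverse_cancel _ hA
  calc blockNN A (Ring.inverse (blockNN A) a)
      = ((blockNN A) * Ring.inverse (blockNN A)) a := rfl
    _ = a := by rw [h]; rfl

lemma projN_A (A : FullSp m n →L[ℂ] FullSp m n) (a : NormalSp m) (b : TangSp m n) :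
    projN m n (A (injN m n a + injT m n b)) = blockNN A a + blockNT A b := by
  simp [blockNN, blockNT, map_add]

lemma projT_A (A : FullSp m n →L[ℂ] FullSp m n) (a : NormalSp m) (b : TangSp m n) :
    projT m n (A (injN m n a + injT m n b)) = blockTN A a + blockTT A b := by
  simp [blockTN, blockTT, map_add]

lemma pd_slice (f : ℝ × Rn n → ℂ) (q : ℝ × Rn n) (hf : DifferentiableAt ℝ f q) (k : Fin n) :
    pd k (fun y => f (q.1, y)) q.2 = pdx k f q := by
  have hι : HasFDerivAt (fun y : Rn n => (q.1, y))
      ((0 : Rn n →L[ℝ] ℝ).prod (ContinuousLinearMap.id ℝ (Rn n))) q.2 :=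
    (hasFDerivAt_const q.1 q.2).prodMk (hasFDerivAt_id q.2)
  have h2 : HasFDerivAt (fun y => f (q.1, y))
      ((fderiv ℝ f q).comp ((0 : Rn n →L[ℝ] ℝ).prod (ContinuousLinearMap.id ℝ (Rn n)))) q.2 :=
    HasFDerivAt.comp q.2 hf.hasFDerivAt hι
  unfold pd pdx
  rw [h2.fderiv]
  rfl

lemma pdt_neg (f : ℝ × Rn n → ℂ) (q : ℝ × Rn n) :
    pdt (fun r => -(f r)) q = -(pdt f q) := by
  unfold pdt; rw [fderiv_fun_neg]; simp

lemma pdx_neg (k : Fin n) (f : ℝ × Rn n → ℂ) (q : ℝ × Rn n) :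
    pdx k (fun r => -(f r)) q = -(pdx k f q) := by
  unfold pdx; rw [fderiv_fun_neg]; simp

lemma fderiv_fderiv_apply (f : ℝ × Rn n → ℂ) (q : ℝ × Rn n)
    (hf : DifferentiableAt ℝ (fderiv ℝ f) q) (w e : ℝ × Rn n) :
    fderiv ℝ (fun r => fderiv ℝ f r w) q e = fderiv ℝ (fderiv ℝ f) q e w := by
  have := fderiv_clm_apply (c := fderiv ℝ f) (u := fun _ => w) hf (differentiableAt_const w)
  rw [this]
  simp

lemma diff_fderiv_apply (f : ℝ × Rn n → ℂ) (q : ℝ × Rn n)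
    (hf : DifferentiableAt ℝ (fderiv ℝ f) q) (w : ℝ × Rn n) :
    DifferentiableAt ℝ (fun r => fderiv ℝ f r w) q :=
  hf.clm_apply (differentiableAt_const w)

lemma symm_second (f : ℝ × Rn n → ℂ) (Ω : Set (ℝ × Rn n)) (hΩ : IsOpen Ω) (q : ℝ × Rn n)
    (hq : q ∈ Ω) (hf : ContDiffOn ℝ 2 f Ω) (e w : ℝ × Rn n) :
    fderiv ℝ (fderiv ℝ f) q e w = fderiv ℝ (fderiv ℝ f) q w e := by
  have hmem : Ω ∈ nhds q := hΩ.mem_nhds hq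
  have hev : ∀ᶠ y in nhds q, HasFDerivAt f (fderiv ℝ f y) y := by
    filter_upwards [hmem] with y hy
    exact ((hf.contDiffAt (hΩ.mem_nhds hy)).differentiableAt (by norm_num)).hasFDerivAt
  have hq2 : ContDiffAt ℝ 2 f q := hf.contDiffAt hmem
  have h1 : ContDiffAt ℝ 1 (fderiv ℝ f) q := hq2.fderiv_right (by norm_num)
  have h2 : HasFDerivAt (fderiv ℝ f) (fderiv ℝ (fderiv ℝ f) q) q :=
    (h1.differentiableAt (by norm_num)).hasFDerivAt
  exact second_derivative_symmetric_of_eventually hev h2 e w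

lemma comp_contDiffOn' {Ω : Set (ℝ × Rn n)} {v : ℝ × Rn n → FullSp m n}
    (hv : ContDiffOn ℝ 2 v Ω) (idx : Fin m ⊕ Fin m × Fin n) :
    ContDiffOn ℝ 2 (fun r => v r idx) Ω := by
  have := (((EuclideanSpace.proj (𝕜 := ℂ) idx).restrictScalars ℝ).contDiff).comp_contDiffOn hv
  exact this

/-- if `v` solves `∂_t v + B(Dv) = 0` (with `B = Â` and `D` acting
in the `x`-variable), then `u := −v⊥` solves `div A∇u = 0`, and the conormal
gradient of `u` equals `Dv`. -/
theorem statement10 (m n : ℕ) (hm : 1 ≤ m) (hn : 1 ≤ n)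
    (Ω : Set (ℝ × Rn n)) (hΩ : IsOpen Ω)
    (A : Rn n → FullSp m n →L[ℂ] FullSp m n) (hA : ContDiff ℝ 1 A)
    (hAinv : ∀ x, IsUnit (blockNN (A x)))
    (v : ℝ × Rn n → FullSp m n) (hv : ContDiffOn ℝ 2 v Ω)
    (hveq : ∀ q ∈ Ω, pdtVec v q + hatT (A q.2) (Dop (fun y => v (q.1, y)) q.2) = 0) :
    SolvesDiv A (fun r => WithLp.toLp 2 (fun i => -(v r (Sum.inl i)) : Fin m → ℂ)) Ω ∧
    ∀ q ∈ Ω,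
      conormalGrad A (fun r => WithLp.toLp 2 (fun i => -(v r (Sum.inl i)) : Fin m → ℂ)) q
        = Dop (fun y => v (q.1, y)) q.2 := by
  set u : ℝ × Rn n → NormalSp m := fun r => WithLp.toLp 2 (fun i => -(v r (Sum.inl i)) : Fin m → ℂ) with hu
  -- differentiability facts
  have hdiffAt : ∀ q ∈ Ω, ∀ idx, DifferentiableAt ℝ (fun r => v r idx) q := fun q hq idx =>
    ((comp_contDiffOn' hv idx).contDiffAt (hΩ.mem_nhds hq)).differentiableAt (by norm_num)
  have hfd : ∀ q ∈ Ω, ∀ idx, DifferentiableAt ℝ (fderiv ℝ (fun r => v r idx)) q := by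
    intro q hq idx
    have h2 : ContDiffAt ℝ 2 (fun r => v r idx) q :=
      (comp_contDiffOn' hv idx).contDiffAt (hΩ.mem_nhds hq)
    exact (h2.fderiv_right (m := 1) (by norm_num)).differentiableAt one_ne_zero
  -- the tangential part of Dv
  have keyG : ∀ q ∈ Ω, ∀ p : Fin m × Fin n,
      pdx p.2 (fun r => u r p.1) q = Dop (fun y => v (q.1, y)) q.2 (Sum.inr p) := by
    intro q hq p
    show pdx p.2 (fun r => -(v r (Sum.inl p.1))) q
      = -(pd p.2 (fun y => v (q.1, y) (Sum.inl p.1)) q.2)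
    rw [pdx_neg, pd_slice (fun r => v r (Sum.inl p.1)) q (hdiffAt q hq _) p.2]
  -- the normal part of Dv
  have keyW : ∀ q ∈ Ω, ∀ i : Fin m,
      Dop (fun y => v (q.1, y)) q.2 (Sum.inl i)
        = ∑ k, pdx k (fun r => v r (Sum.inr (i, k))) q := by
    intro q hq i
    show (∑ k, pd k (fun y => v (q.1, y) (Sum.inr (i, k))) q.2) = _
    exact Finset.sum_congr rfl fun k _ =>
      pd_slice (fun r => v r (Sum.inr (i, k))) q (hdiffAt q hq _) k
  -- the gradient of u in terms of v
  have hgrad : ∀ q ∈ Ω, fullGrad u q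
      = injN m n (-(projN m n (pdtVec v q)))
        + injT m n (projT m n (Dop (fun y => v (q.1, y)) q.2)) := by
    intro q hq
    ext idx
    rcases idx with i | p
    · show pdt (fun r => -(v r (Sum.inl i))) q = _
      rw [pdt_neg]
      simp [PiLp.add_apply, injN_inl, injT_inl, PiLp.neg_apply, projN_apply]
      rfl
    · show pdx p.2 (fun r => -(v r (Sum.inl p.1))) q = _
      have := keyG q hq p
      simp only [PiLp.add_apply, injN_inr, injT_inr, projT_apply, zero_add]
      exact this
  -- the structure equations coming from the PDE for v
  have keyN : ∀ q ∈ Ω, projN m n (A q.2 (fullGrad u q))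
      = projN m n (Dop (fun y => v (q.1, y)) q.2) := by
    intro q hq
    set x := q.2
    set w := Dop (fun y => v (q.1, y)) q.2 with hw
    set a : NormalSp m := -(projN m n (pdtVec v q)) with ha
    set b : TangSp m n := projT m n w with hb
    have heq := hveq q hq
    have hN : projN m n (pdtVec v q)
        + (Ring.inverse (blockNN (A x)) (projN m n w)
          - Ring.inverse (blockNN (A x)) (blockNT (A x) b)) = 0 := by
      have := congrArg (projN m n) heq
      simpa [map_add, projN_hatT] using this
    have hNa : Ring.inverse (blockNN (A x)) (projN m n w)
        - Ring.inverse (blockNN (A x)) (blockNT (A x) b) = a :=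
      eq_neg_of_add_eq_zero_right hN
    have hstar : projN m n w = blockNN (A x) a + blockNT (A x) b := by
      have h := congrArg (blockNN (A x)) hNa
      rw [map_sub, inverse_cancel _ (hAinv x), inverse_cancel _ (hAinv x)] at h
      exact sub_eq_iff_eq_add.mp h
    rw [hgrad q hq, projN_A, hstar]
  have keyT : ∀ q ∈ Ω, projT m n (A q.2 (fullGrad u q))
      = -(projT m n (pdtVec v q)) := by
    intro q hq
    set x := q.2
    set w := Dop (fun y => v (q.1, y)) q.2 with hw
    set a : NormalSp m := -(projN m n (pdtVec v q)) with ha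
    set b : TangSp m n := projT m n w with hb
    have heq := hveq q hq
    have hN : projN m n (pdtVec v q)
        + (Ring.inverse (blockNN (A x)) (projN m n w)
          - Ring.inverse (blockNN (A x)) (blockNT (A x) b)) = 0 := by
      have := congrArg (projN m n) heq
      simpa [map_add, projN_hatT] using this
    have hNa : Ring.inverse (blockNN (A x)) (projN m n w)
        - Ring.inverse (blockNN (A x)) (blockNT (A x) b) = a :=
      eq_neg_of_add_eq_zero_right hN
    have hT : projT m n (pdtVec v q)
        + (blockTN (A x) (Ring.inverse (blockNN (A x)) (projN m n w))
          + (blockTT (A x) b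
            - blockTN (A x) (Ring.inverse (blockNN (A x)) (blockNT (A x) b)))) = 0 := by
      have := congrArg (projT m n) heq
      simpa [map_add, projT_hatT] using this
    have h1 : blockTN (A x) a
        = blockTN (A x) (Ring.inverse (blockNN (A x)) (projN m n w))
          - blockTN (A x) (Ring.inverse (blockNN (A x)) (blockNT (A x) b)) := by
      rw [← map_sub, hNa]
    have h2 : projT m n (pdtVec v q) + (blockTN (A x) a + blockTT (A x) b) = 0 := by
      rw [h1]
      rw [← hT]
      abel
    have h3 : blockTN (A x) a + blockTT (A x) b = -(projT m n (pdtVec v q)) :=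
      eq_neg_of_add_eq_zero_right h2
    rw [hgrad q hq, projT_A, h3]
  -- componentwise versions
  have keyN' : ∀ q ∈ Ω, ∀ i : Fin m, (A q.2 (fullGrad u q)) (Sum.inl i)
      = ∑ k, pdx k (fun r => v r (Sum.inr (i, k))) q := by
    intro q hq i
    have h : projN m n (A q.2 (fullGrad u q)) i
        = projN m n (Dop (fun y => v (q.1, y)) q.2) i := by rw [keyN q hq]
    rw [projN_apply, projN_apply] at h
    rw [h, keyW q hq i]
  have keyT' : ∀ q ∈ Ω, ∀ p : Fin m × Fin n, (A q.2 (fullGrad u q)) (Sum.inr p)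
      = -(pdt (fun r => v r (Sum.inr p)) q) := by
    intro q hq p
    have h : projT m n (A q.2 (fullGrad u q)) p
        = (-(projT m n (pdtVec v q))) p := by rw [keyT q hq]
    rw [projT_apply] at h
    rw [h, PiLp.neg_apply, projT_apply]
    rfl
  constructor
  · -- SolvesDiv
    intro q hq
    ext i
    show pdt (fun r => (A r.2 (fullGrad u r)) (Sum.inl i)) q
        + (∑ k, pdx k (fun r => (A r.2 (fullGrad u r)) (Sum.inr (i, k))) q) = 0
    have e1 : pdt (fun r => (A r.2 (fullGrad u r)) (Sum.inl i)) q
        = pdt (fun r => ∑ k, pdx k (fun r' => v r' (Sum.inr (i, k))) r) q := by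
      unfold pdt
      congr 1
      apply Filter.EventuallyEq.fderiv_eq
      exact Filter.eventuallyEq_of_mem (hΩ.mem_nhds hq) (fun r hr => keyN' r hr i)
    have e2 : ∀ k : Fin n, pdx k (fun r => (A r.2 (fullGrad u r)) (Sum.inr (i, k))) q
        = pdx k (fun r => -(pdt (fun r' => v r' (Sum.inr (i, k))) r)) q := by
      intro k
      unfold pdx
      congr 1
      apply Filter.EventuallyEq.fderiv_eq
      exact Filter.eventuallyEq_of_mem (hΩ.mem_nhds hq) (fun r hr => keyT' r hr (i, k))
    rw [e1, Finset.sum_congr rfl (fun k _ => e2 k)]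
    -- now compute with second derivatives
    have t1 : pdt (fun r => ∑ k, pdx k (fun r' => v r' (Sum.inr (i, k))) r) q
        = ∑ k, fderiv ℝ (fderiv ℝ (fun r => v r (Sum.inr (i, k)))) q (1, 0)
            (0, EuclideanSpace.single k 1) := by
      show fderiv ℝ (fun r => ∑ k, fderiv ℝ (fun r' => v r' (Sum.inr (i, k))) r
          (0, EuclideanSpace.single k 1)) q (1, 0) = _
      rw [fderiv_fun_sum (fun k _ => diff_fderiv_apply _ _ (hfd q hq _) _)]
      rw [ContinuousLinearMap.sum_apply]
      exact Finset.sum_congr rfl fun k _ =>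
        fderiv_fderiv_apply (fun r => v r (Sum.inr (i, k))) q (hfd q hq _) _ _
    have t2 : ∀ k : Fin n, pdx k (fun r => -(pdt (fun r' => v r' (Sum.inr (i, k))) r)) q
        = -(fderiv ℝ (fderiv ℝ (fun r => v r (Sum.inr (i, k)))) q
            (0, EuclideanSpace.single k 1) (1, 0)) := by
      intro k
      show fderiv ℝ (fun r => -(fderiv ℝ (fun r' => v r' (Sum.inr (i, k))) r (1, 0))) q
          (0, EuclideanSpace.single k 1) = _
      rw [fderiv_fun_neg]
      rw [ContinuousLinearMap.neg_apply]
      rw [fderiv_fderiv_apply (fun r => v r (Sum.inr (i, k))) q (hfd q hq _) _ _]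
    rw [t1, Finset.sum_congr rfl (fun k _ => t2 k)]
    have t3 : ∀ k : Fin n, fderiv ℝ (fderiv ℝ (fun r => v r (Sum.inr (i, k)))) q (1, 0)
        (0, EuclideanSpace.single k 1)
        = fderiv ℝ (fderiv ℝ (fun r => v r (Sum.inr (i, k)))) q
            (0, EuclideanSpace.single k 1) (1, 0) := fun k =>
      symm_second _ Ω hΩ q hq (comp_contDiffOn' hv _) _ _
    rw [Finset.sum_congr rfl (fun k _ => t3 k), ← Finset.sum_add_distrib]
    simp
  · -- conormal gradient
    intro q hq
    ext idx
    rcases idx with i | p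
    · show (A q.2 (fullGrad u q)) (Sum.inl i) = _
      rw [keyN' q hq i, ← keyW q hq i]
    · exact keyG q hq p


end LayerPotential
end
end

section
/- Let n, m ≥ 1, let Ω ⊆ ℝ^{1+n} be open, and let A : ℝⁿ → L(ℂ^{m(1+n)}) be continuously differentiable (t-independent coefficients). Let u, w : Ω → ℂ^m be twice continuously differentiable with div(A∇u) = 0 and div(A*∇w) = 0 in Ω, where A*(x) is the pointwise Hermitian adjoint. Define the vector field V = (V₀, V₁, …, V_n) : Ω → ℂ^{1+n} by V₀(t,x) := ⟨Λ_{A(x)}(1, 0)∇u(t,x), ∇w(t,x)⟩ and V_k(t,x) := ⟨Λ_{A(x)}(0, e_k)∇u(t,x), ∇w(t,x)⟩ for k = 1, …, n, where e_k is the k-th standard basis vector of ℝⁿ. Then V is divergence free in Ω: ∂_t V₀ + Σ_{k=1}^n ∂_{x_k} V_k = 0. -/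
noncomputable section

open MeasureTheory Real ContinuousLinearMap

namespace LayerPotential

variable {m n : ℕ}

open ContinuousLinearMap in
/-- `lambdaForm` as a real-linear continuous map in the coefficients. -/
noncomputable def lamCLM (m n : ℕ) (ν₀ : ℝ) (ν : Fin n → ℝ) :
    (FullSp m n →L[ℂ] FullSp m n) →L[ℝ] (FullSp m n →L[ℝ] FullSp m n) :=
  (ContinuousLinearMap.restrictScalarsL ℂ (FullSp m n) (FullSp m n) ℝ ℝ).comp
    ((((ContinuousLinearMap.compL ℂ (FullSp m n) (FullSp m n) (FullSp m n)).flip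
        (tensorMap m ν₀ ν))
      + (ContinuousLinearMap.compL ℂ (FullSp m n) (FullSp m n) (FullSp m n))
          (contractMap m ν₀ ν)).restrictScalars ℝ)

theorem lamCLM_eq (m n : ℕ) (ν₀ : ℝ) (ν : Fin n → ℝ) (M : FullSp m n →L[ℂ] FullSp m n)
    (v : FullSp m n) : lamCLM m n ν₀ ν M v = lambdaForm M ν₀ ν v := rfl

open ContinuousLinearMap in
/-- The Hermitian adjoint as a real-linear continuous map on operators. -/
noncomputable def adjR (m n : ℕ) :
    (FullSp m n →L[ℂ] FullSp m n) →L[ℝ] (FullSp m n →L[ℂ] FullSp m n) :=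
  LinearMap.mkContinuous
    { toFun := fun M => ContinuousLinearMap.adjoint M
      map_add' := fun a b => map_add _ a b
      map_smul' := by
        intro r a
        show ContinuousLinearMap.adjoint (r • a) = r • ContinuousLinearMap.adjoint a
        have h1 : r • a = ((r : ℂ)) • a := by ext v; simp
        have h2 : r • ContinuousLinearMap.adjoint a
            = ((r : ℂ)) • ContinuousLinearMap.adjoint a := by ext v; simp
        rw [h1, h2, LinearIsometryEquiv.map_smulₛₗ]
        simp }
    1 (by
      intro M
      show ‖ContinuousLinearMap.adjoint M‖ ≤ 1 * ‖M‖
      rw [one_mul]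
      exact le_of_eq (LinearIsometryEquiv.norm_map _ M))
open ContinuousLinearMap in
theorem lambdaForm_eq (A : FullSp m n →L[ℂ] FullSp m n) (ν₀ : ℝ) (ν : Fin n → ℝ) (g : FullSp m n) :
    lambdaForm A ν₀ ν g = A (tensorMap m ν₀ ν g) + contractMap m ν₀ ν (A g) := rfl

theorem tensor10_apply_inl (g : FullSp m n) (i : Fin m) :
    tensorMap m 1 (0 : Fin n → ℝ) g (Sum.inl i) = g (Sum.inl i) := by
  simp [tensorMap]

theorem tensor10_apply_inr (g : FullSp m n) (p : Fin m × Fin n) :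
    tensorMap m 1 (0 : Fin n → ℝ) g (Sum.inr p) = 0 := by
  simp [tensorMap]

theorem tensor0k_apply_inl (k : Fin n) (g : FullSp m n) (i : Fin m) :
    tensorMap m 0 (Pi.single k 1) g (Sum.inl i) = 0 := by
  simp [tensorMap]

theorem tensor0k_apply_inr (k : Fin n) (g : FullSp m n) (p : Fin m × Fin n) :
    tensorMap m 0 (Pi.single k 1) g (Sum.inr p) = (if p.2 = k then g (Sum.inl p.1) else 0) := by
  simp [tensorMap, Pi.single_apply]
  split <;> simp

theorem inner_expand (x y : FullSp m n) :
    (inner ℂ x y : ℂ) = ∑ i, (starRingEnd ℂ) (x (Sum.inl i)) * y (Sum.inl i)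
      + ∑ i, ∑ k, (starRingEnd ℂ) (x (Sum.inr (i, k))) * y (Sum.inr (i, k)) := by
  simp [PiLp.inner_apply, RCLike.inner_apply, Fintype.sum_sum_type, Fintype.sum_prod_type, mul_comm]

theorem innC10 (h z : FullSp m n) :
    (inner ℂ h (contractMap m 1 (0 : Fin n → ℝ) z) : ℂ)
      = - ∑ i, ∑ k, (starRingEnd ℂ) (h (Sum.inr (i, k))) * z (Sum.inr (i, k)) := by
  rw [inner_expand]
  simp [contractMap, Finset.sum_neg_distrib]

theorem innC0k (k : Fin n) (h z : FullSp m n) :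
    (inner ℂ h (contractMap m 0 (Pi.single k 1) z) : ℂ)
      = ∑ i, (starRingEnd ℂ) (h (Sum.inl i)) * z (Sum.inr (i, k)) := by
  rw [inner_expand]
  simp [contractMap, Pi.single_apply, apply_ite (Complex.ofReal), ite_mul, Finset.sum_ite_eq']

open ContinuousLinearMap in
theorem innT10 (M : FullSp m n →L[ℂ] FullSp m n) (h z : FullSp m n) :
    (inner ℂ h (M (tensorMap m 1 (0 : Fin n → ℝ) z)) : ℂ)
      = ∑ i, (starRingEnd ℂ) ((adjoint M h) (Sum.inl i)) * z (Sum.inl i) := by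
  rw [← ContinuousLinearMap.adjoint_inner_left, inner_expand]
  simp [tensor10_apply_inl, tensor10_apply_inr]

open ContinuousLinearMap in
theorem innT0k (k : Fin n) (M : FullSp m n →L[ℂ] FullSp m n) (h z : FullSp m n) :
    (inner ℂ h (M (tensorMap m 0 (Pi.single k 1) z)) : ℂ)
      = ∑ i, (starRingEnd ℂ) ((adjoint M h) (Sum.inr (i, k))) * z (Sum.inl i) := by
  rw [← ContinuousLinearMap.adjoint_inner_left, inner_expand]
  simp [tensor0k_apply_inl, tensor0k_apply_inr, mul_ite, Finset.sum_ite_eq']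

theorem sum_vec_apply {ι : Type*} (s : Finset ι) (v : ι → FullSp m n)
    (idx : Fin m ⊕ Fin m × Fin n) : (∑ k ∈ s, v k) idx = ∑ k ∈ s, v k idx := by
  classical
  induction s using Finset.induction with
  | empty => rfl
  | @insert a s hk ih => rw [Finset.sum_insert hk, Finset.sum_insert hk, ← ih]; rfl

theorem groupA (a : FullSp m n →L[ℂ] FullSp m n) (Y gut : FullSp m n) (gu : Fin n → FullSp m n)
    (hcu : ∀ i k, gut (Sum.inr (i, k)) = gu k (Sum.inl i)) :
    (inner ℂ Y (a (tensorMap m 1 (0 : Fin n → ℝ) gut)) : ℂ)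
      + ∑ k, (inner ℂ Y (a (tensorMap m 0 (Pi.single k 1) (gu k))) : ℂ)
      = inner ℂ Y (a gut) := by
  have hz : tensorMap m 1 (0 : Fin n → ℝ) gut
      + ∑ k, tensorMap m 0 (Pi.single k 1) (gu k) = gut := by
    ext idx
    have : (tensorMap m 1 (0 : Fin n → ℝ) gut + ∑ k, tensorMap m 0 (Pi.single k 1) (gu k)) idx
        = tensorMap m 1 (0 : Fin n → ℝ) gut idx + ∑ k, tensorMap m 0 (Pi.single k 1) (gu k) idx := by
      rw [show (tensorMap m 1 (0 : Fin n → ℝ) gut + ∑ k, tensorMap m 0 (Pi.single k 1) (gu k)) idx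
        = tensorMap m 1 (0 : Fin n → ℝ) gut idx + (∑ k, tensorMap m 0 (Pi.single k 1) (gu k)) idx from rfl,
        sum_vec_apply]
    rw [this]
    rcases idx with i | p
    · simp [tensor10_apply_inl, tensor0k_apply_inl]
    · simp [tensor10_apply_inr, tensor0k_apply_inr, Finset.sum_ite_eq', hcu p.1 p.2]
  conv_rhs => rw [← hz, map_add, map_sum, inner_add_right, inner_sum]
theorem pd_hasFDerivAt {f : ℝ × Rn n → ℂ} {q : ℝ × Rn n} (hf : ContDiffAt ℝ 2 f q)
    (c : ℝ × Rn n) :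
    HasFDerivAt (fun r => fderiv ℝ f r c) ((fderiv ℝ (fderiv ℝ f) q).flip c) q := by
  have h1 : ContDiffAt ℝ 1 (fderiv ℝ f) q := hf.fderiv_right (by norm_num)
  have h2 := (h1.differentiableAt one_ne_zero).hasFDerivAt
  have h3 := h2.clm_apply (hasFDerivAt_const c q)
  simpa using h3

theorem grad_hasFDerivAt {u : ℝ × Rn n → NormalSp m} {q : ℝ × Rn n}
    (hu : ∀ i : Fin m, ContDiffAt ℝ 2 (fun r => u r i) q) :
    ∃ D : (ℝ × Rn n) →L[ℝ] FullSp m n, HasFDerivAt (fullGrad u) D q ∧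
      (∀ v (i : Fin m), D v (Sum.inl i)
        = fderiv ℝ (fderiv ℝ (fun r => u r i)) q v ((1:ℝ), (0 : Rn n))) ∧
      (∀ v (p : Fin m × Fin n), D v (Sum.inr p)
        = fderiv ℝ (fderiv ℝ (fun r => u r p.1)) q v ((0:ℝ), EuclideanSpace.single p.2 1)) := by
  classical
  set d : (Fin m ⊕ Fin m × Fin n) → ((ℝ × Rn n) →L[ℝ] ℂ) := fun idx => Sum.elim
    (fun i => (fderiv ℝ (fderiv ℝ (fun r => u r i)) q).flip ((1:ℝ), (0 : Rn n)))
    (fun p => (fderiv ℝ (fderiv ℝ (fun r => u r p.1)) q).flip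
      ((0:ℝ), EuclideanSpace.single p.2 1)) idx with hd
  refine ⟨((PiLp.continuousLinearEquiv 2 ℝ (fun _ : Fin m ⊕ Fin m × Fin n => ℂ)).symm :
      (∀ _ : Fin m ⊕ Fin m × Fin n, ℂ) ≃L[ℝ] FullSp m n).toContinuousLinearMap.comp
      (ContinuousLinearMap.pi d), ?_, fun v i => rfl, fun v p => rfl⟩
  rw [← hasFDerivWithinAt_univ, hasFDerivWithinAt_piLp _]
  intro idx
  rw [hasFDerivWithinAt_univ]
  have heq : PiLp.proj 2 (fun _ : Fin m ⊕ Fin m × Fin n => ℂ) idx ∘L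
      ((PiLp.continuousLinearEquiv 2 ℝ (fun _ : Fin m ⊕ Fin m × Fin n => ℂ)).symm :
      (∀ _ : Fin m ⊕ Fin m × Fin n, ℂ) ≃L[ℝ] FullSp m n).toContinuousLinearMap.comp
      (ContinuousLinearMap.pi d) = d idx := by ext v <;> rfl
  rw [heq]
  rcases idx with i | p
  · exact pd_hasFDerivAt (hu i) _
  · exact pd_hasFDerivAt (hu p.1) _
open ContinuousLinearMap in
theorem key_algebra (a : FullSp m n →L[ℂ] FullSp m n) (a' : Fin n → (FullSp m n →L[ℂ] FullSp m n))
    (X Y gut gwt : FullSp m n) (gu gw : Fin n → FullSp m n)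
    (hcu : ∀ i k, gut (Sum.inr (i, k)) = gu k (Sum.inl i))
    (hcw : ∀ i k, gwt (Sum.inr (i, k)) = gw k (Sum.inl i))
    (heu : ∀ i, a gut (Sum.inl i)
      + ∑ k, (a (gu k) (Sum.inr (i, k)) + (a' k) X (Sum.inr (i, k))) = 0)
    (hew : ∀ i, adjoint a gwt (Sum.inl i)
      + ∑ k, (adjoint a (gw k) (Sum.inr (i, k)) + adjoint (a' k) Y (Sum.inr (i, k))) = 0) :
    (inner ℂ Y (lambdaForm a 1 0 gut) : ℂ) + inner ℂ gwt (lambdaForm a 1 0 X)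
      + ∑ k, ((inner ℂ Y (lambdaForm (a' k) 0 (Pi.single k 1) X) : ℂ)
          + inner ℂ Y (lambdaForm a 0 (Pi.single k 1) (gu k))
          + inner ℂ (gw k) (lambdaForm a 0 (Pi.single k 1) X)) = 0 := by
  have hA := groupA a Y gut gu hcu
  simp only [innT10, innT0k] at hA
  rw [inner_expand] at hA
  have hEU : ∑ i, (starRingEnd ℂ) (Y (Sum.inl i)) * (a gut (Sum.inl i)
      + ∑ k, (a (gu k) (Sum.inr (i, k)) + (a' k) X (Sum.inr (i, k)))) = 0 :=
    Finset.sum_eq_zero fun i _ => by rw [heu i, mul_zero]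
  simp only [mul_add, Finset.mul_sum, Finset.sum_add_distrib] at hEU
  have hEW : ∑ i, (starRingEnd ℂ) (adjoint a gwt (Sum.inl i)
      + ∑ k, (adjoint a (gw k) (Sum.inr (i, k)) + adjoint (a' k) Y (Sum.inr (i, k))))
      * X (Sum.inl i) = 0 :=
    Finset.sum_eq_zero fun i _ => by rw [hew i, map_zero, zero_mul]
  simp only [map_add, map_sum, add_mul, Finset.sum_mul, Finset.sum_add_distrib] at hEW
  have hCW : ∑ k, ∑ i, (starRingEnd ℂ) (gw k (Sum.inl i)) * (a X) (Sum.inr (i, k))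
      = ∑ i, ∑ k, (starRingEnd ℂ) (gwt (Sum.inr (i, k))) * (a X) (Sum.inr (i, k)) := by
    rw [Finset.sum_comm]
    exact Finset.sum_congr rfl fun i _ => Finset.sum_congr rfl fun k _ => by rw [hcw i k]
  have hS5 : ∑ k, ∑ i, (starRingEnd ℂ) (adjoint (a' k) Y (Sum.inr (i, k))) * X (Sum.inl i)
      = ∑ i, ∑ k, (starRingEnd ℂ) (adjoint (a' k) Y (Sum.inr (i, k))) * X (Sum.inl i) :=
    Finset.sum_comm
  have hS9 : ∑ k, ∑ i, (starRingEnd ℂ) (adjoint a (gw k) (Sum.inr (i, k))) * X (Sum.inl i)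
      = ∑ i, ∑ k, (starRingEnd ℂ) (adjoint a (gw k) (Sum.inr (i, k))) * X (Sum.inl i) :=
    Finset.sum_comm
  have hS6 : ∑ k, ∑ i, (starRingEnd ℂ) (Y (Sum.inl i)) * (a' k) X (Sum.inr (i, k))
      = ∑ i, ∑ k, (starRingEnd ℂ) (Y (Sum.inl i)) * (a' k) X (Sum.inr (i, k)) :=
    Finset.sum_comm
  have hS8 : ∑ k, ∑ i, (starRingEnd ℂ) (Y (Sum.inl i)) * a (gu k) (Sum.inr (i, k))
      = ∑ i, ∑ k, (starRingEnd ℂ) (Y (Sum.inl i)) * a (gu k) (Sum.inr (i, k)) :=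
    Finset.sum_comm
  simp only [lambdaForm_eq, inner_add_right, innC10, innC0k, Finset.sum_add_distrib]
  simp only [innT0k, innT10]
  linear_combination hA + hEU + hEW + hCW + hS5 + hS6 + hS8 + hS9


set_option maxHeartbeats 1600000

/-- the Green-type field `V = (⟨Λ_A(1,0)∇u, ∇w⟩, (⟨Λ_A(0,e_k)∇u, ∇w⟩)_k)`
built from solutions `u` of `div A∇u = 0` and `w` of `div A*∇w = 0` is divergence free. -/
theorem statement13 (m n : ℕ) (hm : 1 ≤ m) (hn : 1 ≤ n)
    (Ω : Set (ℝ × Rn n)) (hΩ : IsOpen Ω)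
    (A : Rn n → FullSp m n →L[ℂ] FullSp m n) (hA : ContDiff ℝ 1 A)
    (u w : ℝ × Rn n → NormalSp m)
    (hu : ContDiffOn ℝ 2 u Ω) (hw : ContDiffOn ℝ 2 w Ω)
    (hus : SolvesDiv A u Ω)
    (hws : SolvesDiv (fun x => ContinuousLinearMap.adjoint (A x)) w Ω) :
    ∀ q ∈ Ω,
      pdt (fun r => (inner ℂ (fullGrad w r) (lambdaForm (A r.2) 1 0 (fullGrad u r)) : ℂ)) q
        + ∑ k, pdx k (fun r =>
            (inner ℂ (fullGrad w r)
              (lambdaForm (A r.2) 0 (Pi.single k 1) (fullGrad u r)) : ℂ)) q = 0 := by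
  intro q hq
  have hqmem : Ω ∈ nhds q := hΩ.mem_nhds hq
  have hui : ∀ i : Fin m, ContDiffAt ℝ 2 (fun r => u r i) q := fun i =>
    ((PiLp.proj (𝕜 := ℝ) 2 (fun _ : Fin m => ℂ) i).contDiff.contDiffAt).comp q
      (hu.contDiffAt hqmem)
  have hwi : ∀ i : Fin m, ContDiffAt ℝ 2 (fun r => w r i) q := fun i =>
    ((PiLp.proj (𝕜 := ℝ) 2 (fun _ : Fin m => ℂ) i).contDiff.contDiffAt).comp q
      (hw.contDiffAt hqmem)
  obtain ⟨Du, hGu, hDuN, hDuT⟩ := grad_hasFDerivAt hui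
  obtain ⟨Dw, hGw, hDwN, hDwT⟩ := grad_hasFDerivAt hwi
  -- Clairaut
  have hcu : ∀ i k, Du ((1:ℝ), (0 : Rn n)) (Sum.inr (i, k))
      = Du ((0:ℝ), EuclideanSpace.single k 1) (Sum.inl i) := by
    intro i k
    rw [hDuT ((1:ℝ), (0 : Rn n)) (i, k), hDuN ((0:ℝ), EuclideanSpace.single k 1) i]
    exact ((hui i).isSymmSndFDerivAt (by norm_num)) _ _
  have hcw : ∀ i k, Dw ((1:ℝ), (0 : Rn n)) (Sum.inr (i, k))
      = Dw ((0:ℝ), EuclideanSpace.single k 1) (Sum.inl i) := by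
    intro i k
    rw [hDwT ((1:ℝ), (0 : Rn n)) (i, k), hDwN ((0:ℝ), EuclideanSpace.single k 1) i]
    exact ((hwi i).isSymmSndFDerivAt (by norm_num)) _ _
  -- derivative of the coefficients
  have hB0 : HasFDerivAt (fun r : ℝ × Rn n => A r.2)
      ((fderiv ℝ A q.2).comp (ContinuousLinearMap.snd ℝ ℝ (Rn n))) q :=
    ((hA.differentiable one_ne_zero) q.2).hasFDerivAt.comp q hasFDerivAt_snd
  set B' : (ℝ × Rn n) →L[ℝ] (FullSp m n →L[ℂ] FullSp m n) :=
    (fderiv ℝ A q.2).comp (ContinuousLinearMap.snd ℝ ℝ (Rn n)) with hB'def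
  have hB'et : B' ((1:ℝ), (0 : Rn n)) = 0 := by
    simp [hB'def]
  set Ak : Fin n → (FullSp m n →L[ℂ] FullSp m n) :=
    fun k => fderiv ℝ A q.2 (EuclideanSpace.single k 1) with hAkdef
  have hB'ex : ∀ k, B' ((0:ℝ), EuclideanSpace.single k 1) = Ak k := fun k => rfl
  set rsL := ContinuousLinearMap.restrictScalarsL ℂ (FullSp m n) (FullSp m n) ℝ ℝ with hrsL
  -- the interior equation for u at q
  have hS : HasFDerivAt (fun r => A r.2 (fullGrad u r))
      ((rsL (A q.2)).comp Du + (rsL.comp B').flip (fullGrad u q)) q :=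
    (rsL.hasFDerivAt.comp q hB0).clm_apply hGu
  have heu : ∀ i, (A q.2) (Du ((1:ℝ), (0 : Rn n))) (Sum.inl i)
      + ∑ k, ((A q.2) (Du ((0:ℝ), EuclideanSpace.single k 1)) (Sum.inr (i, k))
        + (Ak k) (fullGrad u q) (Sum.inr (i, k))) = 0 := by
    intro i
    have h0 : pdt (fun r => A r.2 (fullGrad u r) (Sum.inl i)) q
        + ∑ k, pdx k (fun r => A r.2 (fullGrad u r) (Sum.inr (i, k))) q = 0 :=
      congrArg (fun v : NormalSp m => v i) (hus q hq)
    have hc : ∀ idx, HasFDerivAt (fun r => A r.2 (fullGrad u r) idx)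
        ((PiLp.proj (𝕜 := ℝ) 2 (fun _ : Fin m ⊕ Fin m × Fin n => ℂ) idx).comp
          ((rsL (A q.2)).comp Du + (rsL.comp B').flip (fullGrad u q))) q := by
      intro idx
      exact (PiLp.proj (𝕜 := ℝ) 2 (fun _ : Fin m ⊕ Fin m × Fin n => ℂ) idx).hasFDerivAt.comp q hS
    have hval : ∀ v idx, ((PiLp.proj (𝕜 := ℝ) 2 (fun _ : Fin m ⊕ Fin m × Fin n => ℂ) idx).comp
          ((rsL (A q.2)).comp Du + (rsL.comp B').flip (fullGrad u q))) v
        = (A q.2) (Du v) idx + (B' v) (fullGrad u q) idx := fun v idx => rfl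
    rw [pdt, (hc (Sum.inl i)).fderiv] at h0
    simp only [pdx, fun k => ((hc (Sum.inr (i, k))).fderiv :
      fderiv ℝ (fun r => A r.2 (fullGrad u r) (Sum.inr (i, k))) q = _)] at h0
    simp only [hval] at h0
    rw [hB'et] at h0
    have hz0 : ∀ idx, (0 : FullSp m n) idx = 0 := fun _ => rfl
    simp only [hB'ex, ContinuousLinearMap.zero_apply, hz0, add_zero] at h0
    exact h0
  -- the interior equation for w at q
  have hSw : HasFDerivAt (fun r => ContinuousLinearMap.adjoint (A r.2) (fullGrad w r))
      ((rsL (ContinuousLinearMap.adjoint (A q.2))).comp Dw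
        + ((rsL.comp (adjR m n)).comp B').flip (fullGrad w q)) q :=
    (((rsL.comp (adjR m n)).hasFDerivAt.comp q hB0).clm_apply hGw)
  have hew : ∀ i, ContinuousLinearMap.adjoint (A q.2) (Dw ((1:ℝ), (0 : Rn n))) (Sum.inl i)
      + ∑ k, (ContinuousLinearMap.adjoint (A q.2)
            (Dw ((0:ℝ), EuclideanSpace.single k 1)) (Sum.inr (i, k))
        + ContinuousLinearMap.adjoint (Ak k) (fullGrad w q) (Sum.inr (i, k))) = 0 := by
    intro i
    have h0 : pdt (fun r => ContinuousLinearMap.adjoint (A r.2) (fullGrad w r) (Sum.inl i)) q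
        + ∑ k, pdx k (fun r =>
            ContinuousLinearMap.adjoint (A r.2) (fullGrad w r) (Sum.inr (i, k))) q = 0 :=
      congrArg (fun v : NormalSp m => v i) (hws q hq)
    have hc : ∀ idx, HasFDerivAt
        (fun r => ContinuousLinearMap.adjoint (A r.2) (fullGrad w r) idx)
        ((PiLp.proj (𝕜 := ℝ) 2 (fun _ : Fin m ⊕ Fin m × Fin n => ℂ) idx).comp
          ((rsL (ContinuousLinearMap.adjoint (A q.2))).comp Dw
            + ((rsL.comp (adjR m n)).comp B').flip (fullGrad w q))) q := by
      intro idx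
      exact (PiLp.proj (𝕜 := ℝ) 2 (fun _ : Fin m ⊕ Fin m × Fin n => ℂ) idx).hasFDerivAt.comp q hSw
    have hval : ∀ v idx, ((PiLp.proj (𝕜 := ℝ) 2 (fun _ : Fin m ⊕ Fin m × Fin n => ℂ) idx).comp
          ((rsL (ContinuousLinearMap.adjoint (A q.2))).comp Dw
            + ((rsL.comp (adjR m n)).comp B').flip (fullGrad w q))) v
        = ContinuousLinearMap.adjoint (A q.2) (Dw v) idx
          + ContinuousLinearMap.adjoint (B' v) (fullGrad w q) idx := fun v idx => rfl
    rw [pdt, (hc (Sum.inl i)).fderiv] at h0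
    simp only [pdx, fun k => ((hc (Sum.inr (i, k))).fderiv :
      fderiv ℝ (fun r => ContinuousLinearMap.adjoint (A r.2) (fullGrad w r)
        (Sum.inr (i, k))) q = _)] at h0
    simp only [hval] at h0
    rw [hB'et] at h0
    have hz0 : ∀ idx, (0 : FullSp m n) idx = 0 := fun _ => rfl
    simp only [hB'ex, map_zero, ContinuousLinearMap.zero_apply, hz0, add_zero] at h0
    exact h0
  -- derivatives of the Green field components
  have hH0 : HasFDerivAt (fun r => lambdaForm (A r.2) 1 0 (fullGrad u r))
      ((lamCLM m n 1 0 (A q.2)).comp Du + ((lamCLM m n 1 0).comp B').flip (fullGrad u q)) q :=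
    ((lamCLM m n 1 0).hasFDerivAt.comp q hB0).clm_apply hGu
  have hHk : ∀ k, HasFDerivAt (fun r => lambdaForm (A r.2) 0 (Pi.single k 1) (fullGrad u r))
      ((lamCLM m n 0 (Pi.single k 1) (A q.2)).comp Du
        + ((lamCLM m n 0 (Pi.single k 1)).comp B').flip (fullGrad u q)) q :=
    fun k => ((lamCLM m n 0 (Pi.single k 1)).hasFDerivAt.comp q hB0).clm_apply hGu
  have hV0 := HasFDerivAt.inner ℂ hGw hH0
  have hVk := fun k => HasFDerivAt.inner ℂ hGw (hHk k)
  have hP0 : pdt (fun r =>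
      (inner ℂ (fullGrad w r) (lambdaForm (A r.2) 1 0 (fullGrad u r)) : ℂ)) q
      = (inner ℂ (fullGrad w q) (lambdaForm (A q.2) 1 0 (Du ((1:ℝ), (0 : Rn n)))) : ℂ)
        + inner ℂ (Dw ((1:ℝ), (0 : Rn n))) (lambdaForm (A q.2) 1 0 (fullGrad u q)) := by
    have h1 : fderiv ℝ (fun r =>
        (inner ℂ (fullGrad w r) (lambdaForm (A r.2) 1 0 (fullGrad u r)) : ℂ)) q = _ := hV0.fderiv
    rw [pdt, h1]
    simp only [ContinuousLinearMap.comp_apply, ContinuousLinearMap.prod_apply,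
      fderivInnerCLM_apply, ContinuousLinearMap.add_apply, ContinuousLinearMap.flip_apply]
    rw [hB'et]
    simp only [map_zero, ContinuousLinearMap.zero_apply, add_zero, lamCLM_eq]
  have hPk : ∀ k, pdx k (fun r =>
      (inner ℂ (fullGrad w r) (lambdaForm (A r.2) 0 (Pi.single k 1) (fullGrad u r)) : ℂ)) q
      = (inner ℂ (fullGrad w q)
            (lambdaForm (Ak k) 0 (Pi.single k 1) (fullGrad u q)) : ℂ)
        + inner ℂ (fullGrad w q)
            (lambdaForm (A q.2) 0 (Pi.single k 1) (Du ((0:ℝ), EuclideanSpace.single k 1)))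
        + inner ℂ (Dw ((0:ℝ), EuclideanSpace.single k 1))
            (lambdaForm (A q.2) 0 (Pi.single k 1) (fullGrad u q)) := by
    intro k
    have h1 : fderiv ℝ (fun r =>
        (inner ℂ (fullGrad w r) (lambdaForm (A r.2) 0 (Pi.single k 1) (fullGrad u r)) : ℂ)) q
        = _ := (hVk k).fderiv
    rw [pdx, h1]
    simp only [ContinuousLinearMap.comp_apply, ContinuousLinearMap.prod_apply,
      fderivInnerCLM_apply, ContinuousLinearMap.add_apply, ContinuousLinearMap.flip_apply]
    simp only [hB'ex, lamCLM_eq, inner_add_right]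
    ring
  rw [hP0]
  simp only [hPk]
  linear_combination key_algebra (A q.2) Ak (fullGrad u q) (fullGrad w q)
    (Du ((1:ℝ), (0 : Rn n))) (Dw ((1:ℝ), (0 : Rn n)))
    (fun k => Du ((0:ℝ), EuclideanSpace.single k 1))
    (fun k => Dw ((0:ℝ), EuclideanSpace.single k 1)) hcu hcw heu hew

end LayerPotential
end
end
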